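/- arXiv:2510.10737 — 2 statements merged into one kernel-verified Lean document; each statement's English description precedes it below -/
import Mathlib

section
/- Let k be a field, R a k-algebra, M an R-module, and F_1,...,F_r decreasing ℤ-indexed filtrations on M with F_i^0 M = M for all i, such that the extended Rees module Rees(M) is flat over k[t_1,...,t_r]. Fix α = (α_1,...,α_r) ∈ ℝ_{>0}^r and define the ℝ-indexed filtration F_α^λ M = Σ_{⟨α,m⟩ ≥ λ, m ∈ ℕ^r} F_1^{m_1}M ∩ ⋯ ∩ F_r^{m_r}M. Then F_α^0 M = M, and for every λ ≥ 0 there is a canonical isomorphism F_α^λ M / F_α^{>λ} M ≅ ⊕_{⟨α,m⟩ = λ} (F_1^{m_1}M ∩ ⋯ ∩ F_r^{m_r}M) / Σ_{i=1}^r (F_1^{m_1}M ∩ ⋯ ∩ F_i^{m_i+1}M ∩ ⋯ ∩ F_r^{m_r}M). -/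
/-!
STATEMENT 4: Let `k` be a field, `R` a `k`-algebra, `M` an `R`-module, and `𝓕₁, …, 𝓕_r`
decreasing `ℤ`-indexed filtrations on `M` with `𝓕_i^0 M = M`, such that the extended Rees
module is flat over `k[t₁, …, t_r]`. Fix `α ∈ ℝ_{>0}^r` and define
`𝓕_α^λ M = Σ_{⟨α,m⟩ ≥ λ, m ∈ ℕ^r} 𝓕₁^{m₁}M ∩ ⋯ ∩ 𝓕_r^{m_r}M`. Then `𝓕_α^0 M = M` and for
every `λ ≥ 0` there is a canonical isomorphism
`𝓕_α^λ M / 𝓕_α^{>λ} M ≅ ⊕_{⟨α,m⟩ = λ} (∩ᵢ 𝓕_i^{m_i}M) / Σᵢ (𝓕₁^{m₁}M ∩ ⋯ ∩ 𝓕_i^{m_i+1}M ∩ ⋯ ∩ 𝓕_r^{m_r}M)`.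
-/

open scoped TensorProduct

section ReesSetup

variable (k : Type) [Field k] (r : ℕ)

/-- `k[t₁^{±1}, …, t_r^{±1}]`, the group algebra of `ℤ^r` over `k`. -/
abbrev LaurentAlg : Type := AddMonoidAlgebra k (Fin r → ℤ)

/-- The canonical `k`-algebra map `k[t₁, …, t_r] → k[t₁^{±1}, …, t_r^{±1}]`, `tᵢ ↦ tᵢ`. -/
noncomputable def polyToLaurent : MvPolynomial (Fin r) k →ₐ[k] LaurentAlg k r :=
  MvPolynomial.aeval fun i =>
    (AddMonoidAlgebra.single (Pi.single i (1 : ℤ)) (1 : k) : LaurentAlg k r)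

/-- `k[t₁^{±1}, …, t_r^{±1}]` as an algebra over `k[t₁, …, t_r]`. -/
noncomputable instance laurentAlgebra :
    Algebra (MvPolynomial (Fin r) k) (LaurentAlg k r) :=
  (polyToLaurent k r).toRingHom.toAlgebra

noncomputable instance laurentTower :
    IsScalarTower k (MvPolynomial (Fin r) k) (LaurentAlg k r) :=
  IsScalarTower.of_algebraMap_eq' ((polyToLaurent k r).comp_algebraMap).symm

noncomputable instance laurentSMulComm :
    SMulCommClass k (MvPolynomial (Fin r) k) (LaurentAlg k r) :=
  ⟨fun c p a => by simp only [Algebra.smul_def]; ring⟩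

variable (M : Type) [AddCommGroup M] [Module k M]

/-- The Laurent polynomial module `M[t₁^{±1}, …, t_r^{±1}] = k[t^{±1}] ⊗_k M`,
as a module over the polynomial ring `k[t₁, …, t_r]`. -/
def LaurentMod : Type := LaurentAlg k r ⊗[k] M

noncomputable instance : AddCommGroup (LaurentMod k r M) :=
  inferInstanceAs (AddCommGroup (LaurentAlg k r ⊗[k] M))
noncomputable instance : Module k (LaurentMod k r M) :=
  inferInstanceAs (Module k (LaurentAlg k r ⊗[k] M))
noncomputable instance : Module (MvPolynomial (Fin r) k) (LaurentMod k r M) :=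
  inferInstanceAs (Module (MvPolynomial (Fin r) k) (LaurentAlg k r ⊗[k] M))
noncomputable instance : IsScalarTower k (MvPolynomial (Fin r) k) (LaurentMod k r M) :=
  inferInstanceAs (IsScalarTower k (MvPolynomial (Fin r) k) (LaurentAlg k r ⊗[k] M))

/-- The element `m t₁^{d₁} ⋯ t_r^{d_r}` of `M[t₁^{±1}, …, t_r^{±1}]`. -/
noncomputable def laurentTerm (d : Fin r → ℤ) (x : M) : LaurentMod k r M :=
  (show LaurentAlg k r ⊗[k] M from
    (AddMonoidAlgebra.single d (1 : k) : LaurentAlg k r) ⊗ₜ[k] x)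

variable (Rg : Type) [CommRing Rg] [Algebra k Rg] [Module Rg M] [IsScalarTower k Rg M]

/-- The extended Rees module
`Rees(M) = ⊕_{m ∈ ℤ^r} (𝓕₁^{m₁}M ∩ ⋯ ∩ 𝓕_r^{m_r}M) t₁^{-m₁} ⋯ t_r^{-m_r}`
inside `M[t₁^{±1}, …, t_r^{±1}]`, as a submodule over the polynomial ring
`k[t₁, …, t_r]`. The monomial of degree `d = -m` carries the elements of
`𝓕₁^{m₁}M ∩ ⋯ ∩ 𝓕_r^{m_r}M`. -/
noncomputable def ReesSubmodule (F : Fin r → ℤ → Submodule Rg M) :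
    Submodule (MvPolynomial (Fin r) k) (LaurentMod k r M) :=
  Submodule.span _
    {z | ∃ (d : Fin r → ℤ) (x : M), (∀ i, x ∈ F i (-(d i))) ∧ z = laurentTerm k r M d x}

end ReesSetup
section DerivedFiltration

variable {r : ℕ} {M : Type} [AddCommGroup M] {Rg : Type} [CommRing Rg] [Module Rg M]

/-- `𝓕₁^{m₁}M ∩ ⋯ ∩ 𝓕_r^{m_r}M` for `m ∈ ℤ^r`. -/
def interF (F : Fin r → ℤ → Submodule Rg M) (m : Fin r → ℤ) : Submodule Rg M :=
  ⨅ i, F i (m i)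

/-- The derived `ℝ`-indexed filtration
`𝓕_α^λ M = Σ_{⟨α,m⟩ ≥ λ, m ∈ ℕ^r} 𝓕₁^{m₁}M ∩ ⋯ ∩ 𝓕_r^{m_r}M`. -/
noncomputable def Falpha (F : Fin r → ℤ → Submodule Rg M) (α : Fin r → ℝ) (t : ℝ) :
    Submodule Rg M :=
  ⨆ (m : Fin r → ℕ) (_ : t ≤ ∑ i, α i * (m i : ℝ)), interF F fun i => (m i : ℤ)

/-- `𝓕_α^{>λ} M = ⋃_{λ' > λ} 𝓕_α^{λ'} M`. -/
noncomputable def FalphaGt (F : Fin r → ℤ → Submodule Rg M) (α : Fin r → ℝ) (t : ℝ) :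
    Submodule Rg M :=
  ⨆ (t' : ℝ) (_ : t < t'), Falpha F α t'

end DerivedFiltration


section Proj
variable (k : Type) [Field k] (r : ℕ) (M : Type) [AddCommGroup M] [Module k M]

/-- cast of exponent vectors -/
def zcast (e : Fin r →₀ ℕ) : Fin r → ℤ := fun i => (e i : ℤ)

lemma polyToLaurent_monomial (e : Fin r →₀ ℕ) (c : k) :
    polyToLaurent k r (MvPolynomial.monomial e c) =
      AddMonoidAlgebra.single (zcast r e) c := by
  classical
  rw [polyToLaurent, MvPolynomial.aeval_monomial]
  have h2 : (Finsupp.prod e fun i n =>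
      (AddMonoidAlgebra.single (Pi.single i (1:ℤ)) (1:k) : LaurentAlg k r) ^ n)
      = AddMonoidAlgebra.single (zcast r e) 1 := by
    unfold Finsupp.prod
    simp only [AddMonoidAlgebra.single_pow, one_pow]
    rw [AddMonoidAlgebra.prod_single]
    congr 1
    · funext j
      simp only [Finset.sum_apply, Pi.smul_apply, Pi.single_apply, smul_ite, smul_zero, zcast]
      rw [Finset.sum_ite_eq e.support j]
      split
      · simp
      · rename_i hj
        simp [Finsupp.notMem_support_iff.mp hj]
    · simp
  rw [h2, AddMonoidAlgebra.coe_algebraMap]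
  show AddMonoidAlgebra.single 0 c * _ = _
  rw [AddMonoidAlgebra.single_mul_single, zero_add, mul_one]

lemma polyToLaurent_eq_sum (p : MvPolynomial (Fin r) k) :
    polyToLaurent k r p =
      ∑ e ∈ p.support, AddMonoidAlgebra.single (zcast r e) (MvPolynomial.coeff e p) := by
  conv_lhs => rw [p.as_sum]
  rw [map_sum]
  exact Finset.sum_congr rfl fun e _ => polyToLaurent_monomial k r e _

lemma smul_tmul_poly (p : MvPolynomial (Fin r) k) (f : LaurentAlg k r) (x : M) :
    p • (show LaurentMod k r M from f ⊗ₜ[k] x)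
      = (show LaurentMod k r M from (polyToLaurent k r p * f) ⊗ₜ[k] x) := rfl
end Proj
section Proj
variable (k : Type) [Field k] (r : ℕ) (M : Type) [AddCommGroup M] [Module k M]

noncomputable def coeffL (g : Fin r → ℤ) : LaurentAlg k r →ₗ[k] k where
  toFun f := f.coeff g
  map_add' a b := by exact Finsupp.add_apply a.coeff b.coeff g
  map_smul' c a := by exact Finsupp.smul_apply c a.coeff g

noncomputable def piL (g : Fin r → ℤ) : LaurentMod k r M →ₗ[k] M :=
  TensorProduct.lift ((LinearMap.lsmul k M).comp (coeffL k r g))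

lemma piL_tmul (g : Fin r → ℤ) (f : LaurentAlg k r) (x : M) :
    piL k r M g (show LaurentMod k r M from f ⊗ₜ[k] x) = f.coeff g • x := rfl

lemma piL_laurentTerm (g d : Fin r → ℤ) (x : M) :
    piL k r M g (laurentTerm k r M d x) = if d = g then x else 0 := by
  rw [laurentTerm, piL_tmul, AddMonoidAlgebra.coeff_single_apply]
  split <;> simp_all
end Proj

section Proj2
variable (k : Type) [Field k] (r : ℕ) (M : Type) [AddCommGroup M] [Module k M]

lemma piL_poly_smul (p : MvPolynomial (Fin r) k) (g : Fin r → ℤ) (z : LaurentMod k r M) :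
    piL k r M g (p • z)
      = ∑ e ∈ p.support, MvPolynomial.coeff e p • piL k r M (g - zcast r e) z := by
  induction z using TensorProduct.induction_on with
  | zero =>
      show piL k r M g (p • (0 : LaurentMod k r M)) = ∑ e ∈ p.support,
        MvPolynomial.coeff e p • piL k r M (g - zcast r e) (0 : LaurentMod k r M)
      simp
  | tmul f x =>
      rw [smul_tmul_poly, piL_tmul, polyToLaurent_eq_sum, Finset.sum_mul,
        AddMonoidAlgebra.coeff_sum, Finsupp.finset_sum_apply]
      rw [Finset.sum_smul]
      refine Finset.sum_congr rfl fun e _ => ?_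
      rw [AddMonoidAlgebra.coeff_single_mul_apply, piL_tmul, ← smul_assoc, smul_eq_mul]
      rw [neg_add_eq_sub]
  | add z w hz hw =>
      have h1 : p • ((z : LaurentMod k r M) + w) = p • (z : LaurentMod k r M) + p • (w : LaurentMod k r M) :=
        smul_add _ _ _
      have h2 : ∀ e, piL k r M e ((z : LaurentMod k r M) + w) = piL k r M e z + piL k r M e w :=
        fun e => map_add _ _ _
      have h3 : piL k r M g (p • (z : LaurentMod k r M) + p • (w : LaurentMod k r M)) = piL k r M g (p • (z : LaurentMod k r M)) + piL k r M g (p • (w : LaurentMod k r M)) :=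
        map_add _ _ _
      show piL k r M g (p • ((z : LaurentMod k r M) + w)) = ∑ e ∈ p.support,
        MvPolynomial.coeff e p • piL k r M (g - zcast r e) ((z : LaurentMod k r M) + w)
      rw [h1, h3]
      simp only [h2, smul_add, Finset.sum_add_distrib]
      exact congrArg₂ _ hz hw

lemma monomial_smul_laurentTerm (e : Fin r →₀ ℕ) (d : Fin r → ℤ) (x : M) :
    (MvPolynomial.monomial e (1:k)) • laurentTerm k r M d x
      = laurentTerm k r M (zcast r e + d) x := by
  rw [laurentTerm, laurentTerm, smul_tmul_poly, polyToLaurent_monomial,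
    AddMonoidAlgebra.single_mul_single, mul_one]

end Proj2

section Mem
variable (k : Type) [Field k] (r : ℕ) (M : Type) [AddCommGroup M] [Module k M]
variable (Rg : Type) [CommRing Rg] [Algebra k Rg] [Module Rg M] [IsScalarTower k Rg M]
variable (F : Fin r → ℤ → Submodule Rg M)

lemma kSmul_mem {S : Submodule Rg M} {x : M} (c : k) (hx : x ∈ S) : c • x ∈ S := by
  rw [← algebraMap_smul Rg c x]; exact S.smul_mem _ hx

lemma piL_mem_of_mem_rees (hdec : ∀ i, Antitone (F i)) {z : LaurentMod k r M}
    (hz : z ∈ ReesSubmodule k r M Rg F) :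
    ∀ (g : Fin r → ℤ) (i : Fin r), piL k r M g z ∈ F i (-(g i)) := by
  refine Submodule.span_induction
    (p := fun z _ => ∀ (g : Fin r → ℤ) (i : Fin r), piL k r M g z ∈ F i (-(g i)))
    ?_ ?_ ?_ ?_ hz
  · rintro z ⟨d, x, hx, rfl⟩ g i
    rw [piL_laurentTerm]
    split
    · rename_i h; subst h; exact hx i
    · exact zero_mem _
  · intro g i; rw [map_zero]; exact zero_mem _
  · intro x y _ _ hx hy g i; rw [map_add]; exact add_mem (hx g i) (hy g i)
  · intro p z _ hz g i
    rw [piL_poly_smul]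
    refine Submodule.sum_mem _ fun e _ => kSmul_mem k M Rg (MvPolynomial.coeff e p) ?_
    refine hdec i ?_ (hz (g - zcast r e) i)
    simp only [Pi.sub_apply, zcast, neg_sub]
    omega
end Mem

section Key
variable {k : Type} [Field k] {r : ℕ} {M : Type} [AddCommGroup M] [Module k M]
variable {Rg : Type} [CommRing Rg] [Algebra k Rg] [Module Rg M] [IsScalarTower k Rg M]

noncomputable def f2 {r : ℕ} (b : Fin r → ℕ) : Fin r →₀ ℕ := Finsupp.equivFunOnFinite.symm b

lemma zcast_f2 {r : ℕ} (b : Fin r → ℕ) : zcast r (f2 b) = fun i => (b i : ℤ) := rfl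

lemma mem_rees (F : Fin r → ℤ → Submodule Rg M) (d : Fin r → ℤ) (x : M)
    (hx : ∀ i, x ∈ F i (-(d i))) :
    laurentTerm k r M d x ∈ ReesSubmodule k r M Rg F :=
  Submodule.subset_span ⟨d, x, hx, rfl⟩

lemma key (F : Fin r → ℤ → Submodule Rg M) (hdec : ∀ i, Antitone (F i))
    (hflat : Module.Flat (MvPolynomial (Fin r) k) ↥(ReesSubmodule k r M Rg F))
    (a : Fin r → ℕ) (x : M) (hxa : ∀ i, x ∈ F i (a i))
    (T : Set (Fin r → ℕ)) (hx : x ∈ ⨆ b ∈ T, interF F (fun i => (b i : ℤ))) :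
    x ∈ ⨆ b ∈ T, interF F (fun i => ((max (a i) (b i) : ℕ) : ℤ)) := by
  classical
  haveI := hflat
  rw [iSup_subtype'] at hx
  obtain ⟨f, hf, hsum⟩ := (Submodule.mem_iSup_iff_exists_finsupp _ x).mp hx
  set N := ReesSubmodule k r M Rg F with hN
  set av : Fin r → ℤ := fun i => (a i : ℤ) with hav
  let ι := Option {c : T // c ∈ f.support}
  let nn : ι → N := fun o =>
    match o with
    | none => ⟨laurentTerm k r M (-av) x,
        mem_rees F (-av) x (by intro i; simpa [hav] using hxa i)⟩
    | some c => ⟨laurentTerm k r M (-(fun i => ((c.1.1 i : ℤ)))) (f c.1),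
        mem_rees F _ _ (by
          intro i
          have := (Submodule.mem_iInf _).mp (hf c.1) i
          simpa using this)⟩
  let q : ι → MvPolynomial (Fin r) k := fun o =>
    match o with
    | none => MvPolynomial.monomial (f2 a) 1
    | some c => -(MvPolynomial.monomial (f2 c.1.1) 1)
  have key0 : ∀ (b : Fin r → ℕ) (y : M),
      (MvPolynomial.monomial (f2 b) (1:k)) • laurentTerm k r M (-(fun i => ((b i : ℤ)))) y
        = laurentTerm k r M 0 y := by
    intro b y
    rw [monomial_smul_laurentTerm, zcast_f2]
    congr 1
    funext i; simp
  have hrel : ∑ i, q i • nn i = 0 := by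
    apply Subtype.ext
    push_cast [Submodule.coe_smul]
    rw [Fintype.sum_option]
    show (MvPolynomial.monomial (f2 a) (1:k)) • laurentTerm k r M (-av) x
        + ∑ c : {c : T // c ∈ f.support},
            (-(MvPolynomial.monomial (f2 c.1.1) (1:k))) •
              laurentTerm k r M (-(fun i => ((c.1.1 i : ℤ)))) (f c.1) = 0
    simp only [neg_smul, hav, key0]
    have h2 : ∑ c : {c : T // c ∈ f.support}, laurentTerm k r M 0 (f c.1)
        = laurentTerm k r M 0 x := by
      have hlin : ∀ s : Finset {c : T // c ∈ f.support},
          ∑ c ∈ s, laurentTerm k r M 0 (f c.1)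
            = laurentTerm k r M 0 (∑ c ∈ s, f c.1) := by
        intro s
        exact (map_sum (TensorProduct.mk k (LaurentAlg k r) M
          (AddMonoidAlgebra.single 0 1)) (fun c => f c.1) s).symm
      rw [hlin]
      congr 1
      rw [Finset.sum_coe_sort f.support (fun c => f c)]
      exact hsum
    rw [Finset.sum_neg_distrib, h2, add_neg_cancel]
  obtain ⟨κ, amat, y, hfac, hsyz⟩ := Module.Flat.isTrivialRelation_of_sum_smul_eq_zero hrel
  have hx0 : x = ∑ j, piL k r M (-av) ((amat none j • y j : N) : LaurentMod k r M) := by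
    have h2 : piL k r M (-av) ((nn none : N) : LaurentMod k r M) = x := by
      show piL k r M (-av) (laurentTerm k r M (-av) x) = x
      rw [piL_laurentTerm, if_pos rfl]
    conv_lhs => rw [← h2]
    rw [hfac none]
    rw [show ((∑ j, amat none j • y j : N) : LaurentMod k r M)
        = ∑ j, ((amat none j • y j : N) : LaurentMod k r M) from map_sum N.subtype _ _]
    rw [map_sum]
  have hx1 : x = ∑ j, ∑ e ∈ (amat none j).support,
      MvPolynomial.coeff e (amat none j) •
        piL k r M (-av - zcast r e) ((y j : N) : LaurentMod k r M) := by
    rw [hx0]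
    refine Finset.sum_congr rfl fun j _ => ?_
    rw [show ((amat none j • y j : N) : LaurentMod k r M)
        = amat none j • ((y j : N) : LaurentMod k r M) from rfl]
    rw [piL_poly_smul]
  rw [hx1]
  refine Submodule.sum_mem _ fun j _ => Submodule.sum_mem _ fun e he => ?_
  have hcne : MvPolynomial.coeff e (amat none j) ≠ 0 := MvPolynomial.mem_support_iff.mp he
  have hs := hsyz j
  rw [Fintype.sum_option] at hs
  have hs' : MvPolynomial.monomial (f2 a) (1:k) * amat none j
      = ∑ c : {c : T // c ∈ f.support},
          MvPolynomial.monomial (f2 c.1.1) (1:k) * amat (some c) j := by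
    show q none * amat none j = _ 
    simp only [show ∀ c, q (some c) = -(MvPolynomial.monomial (f2 c.1.1) (1:k)) from fun c => rfl,
      neg_mul] at hs
    rw [Finset.sum_neg_distrib] at hs
    exact add_neg_eq_zero.mp hs
  have hco := congrArg (MvPolynomial.coeff (e + f2 a)) hs'
  rw [mul_comm, MvPolynomial.coeff_mul_monomial'] at hco
  rw [if_pos le_add_self, add_tsub_cancel_right, mul_one] at hco
  rw [MvPolynomial.coeff_sum] at hco
  obtain ⟨c, -, hc⟩ := Finset.exists_ne_zero_of_sum_ne_zero (s := Finset.univ)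
    (f := fun c : {c : T // c ∈ f.support} =>
      MvPolynomial.coeff (e + f2 a) (MvPolynomial.monomial (f2 c.1.1) (1:k) * amat (some c) j))
    (by rw [← hco]; exact hcne)
  rw [mul_comm, MvPolynomial.coeff_mul_monomial'] at hc
  have hle : f2 c.1.1 ≤ e + f2 a := by
    by_contra h
    rw [if_neg h] at hc
    exact hc rfl
  refine kSmul_mem k M Rg _ ?_
  have hW : interF F (fun i => ((max (a i) (c.1.1 i) : ℕ) : ℤ))
      ≤ ⨆ b ∈ T, interF F (fun i => ((max (a i) (b i) : ℕ) : ℤ)) :=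
    le_iSup₂ (f := fun b (_ : b ∈ T) => interF F (fun i => ((max (a i) (b i) : ℕ) : ℤ)))
      c.1.1 c.1.2
  refine hW ?_
  refine (Submodule.mem_iInf _).mpr fun i => ?_
  have hmem := piL_mem_of_mem_rees k r M Rg F hdec (y j).2 (-av - zcast r e) i
  have heq : -((-av - zcast r e) i) = (a i : ℤ) + (e i : ℤ) := by
    simp [hav, zcast]
    ring
  rw [heq] at hmem
  refine hdec i ?_ hmem
  have h1 : c.1.1 i ≤ e i + a i := by
    have := hle i
    simpa [f2] using this
  show ((max (a i) (c.1.1 i) : ℕ) : ℤ) ≤ (a i : ℤ) + (e i : ℤ)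
  rw [Nat.cast_max]
  exact max_le (by omega) (by omega)

end Key

section Assemble
variable {k : Type} [Field k] {r : ℕ} {M : Type} [AddCommGroup M] [Module k M]
variable {Rg : Type} [CommRing Rg] [Algebra k Rg] [Module Rg M] [IsScalarTower k Rg M]

lemma sumcast_le {α : Fin r → ℝ} (hα : ∀ i, 0 < α i) {c m : Fin r → ℕ}
    (h : ∀ i, c i ≤ m i)
    (hs : (∑ i, α i * (m i : ℝ)) ≤ ∑ i, α i * (c i : ℝ)) : c = m := by
  have h1 : ∀ i ∈ Finset.univ, α i * (c i : ℝ) ≤ α i * (m i : ℝ) := fun i _ =>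
    mul_le_mul_of_nonneg_left (Nat.cast_le.mpr (h i)) (hα i).le
  funext i
  by_contra hne
  have hlt : α i * (c i : ℝ) < α i * (m i : ℝ) :=
    mul_lt_mul_of_pos_left (by exact_mod_cast lt_of_le_of_ne (h i) hne) (hα i)
  have h2 := Finset.sum_lt_sum h1 ⟨i, Finset.mem_univ i, hlt⟩
  linarith

lemma exists_coord_lt {α : Fin r → ℝ} (hα : ∀ i, 0 < α i) {t : ℝ} {m c : Fin r → ℕ}
    (hm : ∑ i, α i * (m i : ℝ) = t)
    (hc : ((∑ i, α i * (c i : ℝ)) = t ∧ c ≠ m) ∨ t < ∑ i, α i * (c i : ℝ)) :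
    ∃ j, m j < c j := by
  by_contra h
  push_neg at h
  rcases hc with ⟨hceq, hcne⟩ | hlt
  · exact hcne (sumcast_le hα h (by rw [hm, hceq]))
  · have := sumcast_le hα h (by linarith)
    subst this
    exact absurd hm (by linarith)

lemma sum_succ_coord (α : Fin r → ℝ) (j : Fin r) (m : Fin r → ℕ) :
    ∑ i, α i * ((m i + if i = j then 1 else 0 : ℕ) : ℝ)
      = (∑ i, α i * (m i : ℝ)) + α j := by
  push_cast
  simp only [mul_add, Finset.sum_add_distrib, mul_ite, mul_one, mul_zero,
    Finset.sum_ite_eq', Finset.mem_univ, if_true]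

lemma interF_anti (F : Fin r → ℤ → Submodule Rg M) (hdec : ∀ i, Antitone (F i))
    {u v : Fin r → ℤ} (h : ∀ i, u i ≤ v i) : interF F v ≤ interF F u :=
  iInf_mono fun i => hdec i (h i)

lemma G_le_Falpha (F : Fin r → ℤ → Submodule Rg M) (α : Fin r → ℝ) {t : ℝ}
    {m : Fin r → ℕ} (h : t ≤ ∑ i, α i * (m i : ℝ)) :
    interF F (fun i => (m i : ℤ)) ≤ Falpha F α t :=
  le_iSup₂ (f := fun (m : Fin r → ℕ) (_ : t ≤ ∑ i, α i * (m i : ℝ)) =>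
    interF F fun i => (m i : ℤ)) m h

lemma Falpha_le_Gt (F : Fin r → ℤ → Submodule Rg M) (α : Fin r → ℝ) {t t' : ℝ}
    (h : t < t') : Falpha F α t' ≤ FalphaGt F α t :=
  le_iSup₂ (f := fun (t' : ℝ) (_ : t < t') => Falpha F α t') t' h

lemma D_le_Gt (F : Fin r → ℤ → Submodule Rg M) (α : Fin r → ℝ) (hα : ∀ i, 0 < α i)
    {t : ℝ} {m : Fin r → ℕ} (hm : ∑ i, α i * (m i : ℝ) = t) :
    (⨆ j, interF F fun i => (m i : ℤ) + if i = j then 1 else 0) ≤ FalphaGt F α t := by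
  refine iSup_le fun j => ?_
  have h1 : (fun i => (m i : ℤ) + if i = j then 1 else 0)
      = fun i => (((m i + if i = j then 1 else 0 : ℕ)) : ℤ) := by
    funext i; split <;> simp
  rw [h1]
  refine le_trans (G_le_Falpha F α (t := t + α j) (le_of_eq ?_))
    (Falpha_le_Gt F α (by linarith [hα j]))
  rw [sum_succ_coord, hm]

lemma Gt_le_bigsup (F : Fin r → ℤ → Submodule Rg M) (α : Fin r → ℝ) {t : ℝ} :
    FalphaGt F α t ≤ ⨆ (b : Fin r → ℕ) (_ : t < ∑ i, α i * (b i : ℝ)),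
      interF F (fun i => (b i : ℤ)) :=
  iSup₂_le fun t' ht' => iSup₂_le fun b hb =>
    le_iSup₂ (f := fun (b : Fin r → ℕ) (_ : t < ∑ i, α i * (b i : ℝ)) =>
      interF F fun i => (b i : ℤ)) b (lt_of_lt_of_le ht' hb)

lemma inj_core (F : Fin r → ℤ → Submodule Rg M) (hdec : ∀ i, Antitone (F i))
    (hflat : Module.Flat (MvPolynomial (Fin r) k) ↥(ReesSubmodule k r M Rg F))
    (α : Fin r → ℝ) (hα : ∀ i, 0 < α i) {t : ℝ} {m : Fin r → ℕ}
    (hm : ∑ i, α i * (m i : ℝ) = t) {x : M}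
    (hxm : x ∈ interF F (fun i => (m i : ℤ)))
    (hx : x ∈ ⨆ c ∈ {c : Fin r → ℕ |
        ((∑ i, α i * (c i : ℝ)) = t ∧ c ≠ m) ∨ t < ∑ i, α i * (c i : ℝ)},
      interF F (fun i => (c i : ℤ))) :
    x ∈ ⨆ j, interF F fun i => (m i : ℤ) + if i = j then 1 else 0 := by
  have hxa : ∀ i, x ∈ F i (m i) := fun i => (Submodule.mem_iInf _).mp hxm i
  have h2 := key F hdec hflat m x hxa _ hx
  have h3 : (⨆ c ∈ {c : Fin r → ℕ |
        ((∑ i, α i * (c i : ℝ)) = t ∧ c ≠ m) ∨ t < ∑ i, α i * (c i : ℝ)},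
      interF F (fun i => ((max (m i) (c i) : ℕ) : ℤ)))
      ≤ ⨆ j, interF F fun i => (m i : ℤ) + if i = j then 1 else 0 := by
    refine iSup₂_le fun c hc => ?_
    obtain ⟨j, hj⟩ := exists_coord_lt hα hm hc
    refine le_trans (interF_anti F hdec fun i => ?_)
      (le_iSup (fun j => interF F fun i => (m i : ℤ) + if i = j then 1 else 0) j)
    rcases eq_or_ne i j with rfl | hne
    · simp only [if_pos rfl, Nat.cast_max]
      have : (m i : ℤ) + 1 ≤ (c i : ℤ) := by exact_mod_cast hj
      exact le_trans this (le_max_right _ _)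
    · simp [if_neg hne]
  exact h3 h2

end Assemble

open DirectSum in
theorem graded_pieces_of_derived_filtration_of_flat_rees
    (k : Type) [Field k] (r : ℕ)
    (M : Type) [AddCommGroup M] [Module k M]
    (Rg : Type) [CommRing Rg] [Algebra k Rg] [Module Rg M] [IsScalarTower k Rg M]
    (F : Fin r → ℤ → Submodule Rg M)
    (hdec : ∀ i, Antitone (F i)) (hF0 : ∀ i, F i 0 = ⊤)
    (hflat : Module.Flat (MvPolynomial (Fin r) k) ↥(ReesSubmodule k r M Rg F))
    (α : Fin r → ℝ) (hα : ∀ i, 0 < α i) :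
    Falpha F α 0 = ⊤ ∧
      ∀ t : ℝ, 0 ≤ t →
        Nonempty
          ((↥(Falpha F α t) ⧸ (FalphaGt F α t).comap (Falpha F α t).subtype) ≃ₗ[Rg]
            ⨁ m : {m : Fin r → ℕ // (∑ i, α i * (m i : ℝ)) = t},
              (↥(interF F fun i => (m.1 i : ℤ)) ⧸
                (⨆ j : Fin r,
                    interF F fun i => (m.1 i : ℤ) + if i = j then 1 else 0).comap
                  (interF F fun i => (m.1 i : ℤ)).subtype)) := by
  classical
  constructor
  · rw [eq_top_iff]
    have h1 : interF F (fun i => ((0:ℕ) : ℤ)) = ⊤ := by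
      rw [eq_top_iff]
      refine le_iInf fun i => ?_
      rw [Nat.cast_zero, hF0 i]
    calc (⊤ : Submodule Rg M) = interF F (fun i => (((0 : Fin r → ℕ) i : ℕ) : ℤ)) := h1.symm
      _ ≤ Falpha F α 0 := G_le_Falpha F α (by simp)
  intro t ht
  set Λ := {m : Fin r → ℕ // (∑ i, α i * (m i : ℝ)) = t} with hΛ
  set P := Falpha F α t with hP
  set Q := FalphaGt F α t with hQ
  set Q' : Submodule Rg ↥P := Q.comap P.subtype with hQ'
  set G : (Fin r → ℕ) → Submodule Rg M := fun m => interF F fun i => (m i : ℤ) with hG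
  set D : (Fin r → ℕ) → Submodule Rg M :=
    fun m => ⨆ j, interF F fun i => (m i : ℤ) + if i = j then 1 else 0 with hD
  have hGP : ∀ m : Λ, G m.1 ≤ P := fun m => G_le_Falpha F α (le_of_eq m.2.symm)
  have hDQ : ∀ m : Λ, D m.1 ≤ Q := fun m => D_le_Gt F α hα m.2
  set D' : ∀ m : Λ, Submodule Rg ↥(G m.1) :=
    fun m => (D m.1).comap (G m.1).subtype with hD'
  -- the component maps
  have hker : ∀ m : Λ, D' m ≤ Q'.comap (Submodule.inclusion (hGP m)) := by
    intro m z hz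
    exact hDQ m hz
  set ψ : ∀ m : Λ, (↥(G m.1) ⧸ D' m) →ₗ[Rg] (↥P ⧸ Q') :=
    fun m => Submodule.mapQ (D' m) Q' (Submodule.inclusion (hGP m)) (hker m) with hψ
  set φ : (⨁ m : Λ, ↥(G m.1) ⧸ D' m) →ₗ[Rg] (↥P ⧸ Q') :=
    DirectSum.toModule Rg Λ _ ψ with hφ
  set quotDS : (⨁ m : Λ, ↥(G m.1)) →ₗ[Rg] (⨁ m : Λ, ↥(G m.1) ⧸ D' m) :=
    DirectSum.toModule Rg Λ _
      (fun m => (DirectSum.lof Rg Λ (fun m => ↥(G m.1) ⧸ D' m) m) ∘ₗ (D' m).mkQ)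
      with hqds
  have hsurj : Function.Surjective φ := by
    intro w
    obtain ⟨p, rfl⟩ := Q'.mkQ_surjective w
    have hp : (p : M) ∈ (⨆ m : Λ, G m.1) ⊔ Q := by
      have hPU : P ≤ (⨆ m : Λ, G m.1) ⊔ Q := by
        refine iSup₂_le fun m hm => ?_
        rcases eq_or_lt_of_le hm with heq | hlt
        · exact le_trans (le_iSup (fun m : Λ => G m.1) ⟨m, heq.symm⟩) le_sup_left
        · exact le_trans (le_trans (G_le_Falpha F α le_rfl) (Falpha_le_Gt F α hlt))
            le_sup_right
      exact hPU p.2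
    obtain ⟨u, hu, v, hv, huv⟩ := Submodule.mem_sup.mp hp
    have hu' : u ∈ P := (iSup_le fun m : Λ => hGP m) hu
    have hv' : v ∈ P := by
      have : v = (p : M) - u := by rw [← huv]; abel
      rw [this]; exact sub_mem p.2 hu'
    -- decompose u
    obtain ⟨f, hf, hsum⟩ := (Submodule.mem_iSup_iff_exists_finsupp _ u).mp hu
    refine ⟨∑ m ∈ f.support, DirectSum.lof Rg Λ _ m ((D' m).mkQ ⟨f m, hf m⟩), ?_⟩
    rw [map_sum]
    have hterm : ∀ m ∈ f.support,
        φ (DirectSum.lof Rg Λ _ m ((D' m).mkQ ⟨f m, hf m⟩))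
          = Q'.mkQ ⟨f m, hGP m (hf m)⟩ := by
      intro m _
      rw [hφ, DirectSum.toModule_lof, hψ]
      rfl
    rw [Finset.sum_congr rfl hterm]
    have hmk : ∑ m ∈ f.support, Q'.mkQ ⟨f m, hGP m (hf m)⟩
        = Q'.mkQ (∑ m ∈ f.support, (⟨f m, hGP m (hf m)⟩ : ↥P)) := (map_sum _ _ _).symm
    rw [hmk]
    have hup : (∑ m ∈ f.support, (⟨f m, hGP m (hf m)⟩ : ↥P)) = ⟨u, hu'⟩ := by
      apply Subtype.ext
      push_cast
      rw [← hsum]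
      rfl
    rw [hup]
    have hpv : Q'.mkQ p = Q'.mkQ ⟨u, hu'⟩ + Q'.mkQ ⟨v, hv'⟩ := by
      rw [← map_add]
      congr 1
      apply Subtype.ext
      exact huv.symm
    rw [hpv, show Q'.mkQ ⟨v, hv'⟩ = 0 from (Submodule.Quotient.mk_eq_zero _).mpr hv,
      add_zero]
  have hinj : Function.Injective φ := by
    rw [injective_iff_map_eq_zero]
    intro ξ hξ
    -- lift ξ along quotDS
    have hqsurj : Function.Surjective quotDS := by
      intro w
      induction w using DirectSum.induction_on with
      | zero => exact ⟨0, map_zero _⟩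
      | of m q =>
          obtain ⟨z, rfl⟩ := (D' m).mkQ_surjective q
          exact ⟨DirectSum.lof Rg Λ _ m z, by rw [hqds, DirectSum.toModule_lof]; rfl⟩
      | add w₁ w₂ h₁ h₂ =>
          obtain ⟨η₁, rfl⟩ := h₁
          obtain ⟨η₂, rfl⟩ := h₂
          exact ⟨η₁ + η₂, map_add _ _ _⟩
    obtain ⟨η, rfl⟩ := hqsurj ξ
    have hΦ : ∀ η₀ : ⨁ m : Λ, ↥(G m.1), φ (quotDS η₀)
        = Q'.mkQ (∑ m ∈ DFinsupp.support η₀, Submodule.inclusion (hGP m) (η₀ m)) := by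
      intro η₀
      conv_lhs => rw [← DirectSum.sum_support_of η₀]
      rw [map_sum, map_sum, map_sum]
      refine Finset.sum_congr rfl fun m _ => ?_
      rw [← DirectSum.lof_eq_of Rg, hqds, DirectSum.toModule_lof, hφ]
      rw [LinearMap.comp_apply, DirectSum.toModule_lof, hψ]
      rfl
    have hmem : (∑ m ∈ DFinsupp.support η, ((η m : ↥(G m.1)) : M)) ∈ Q := by
      have h0 := (Submodule.Quotient.mk_eq_zero Q').mp
        (by rw [← Submodule.mkQ_apply, ← hΦ η]; exact hξ)
      have : ((∑ m ∈ DFinsupp.support η, Submodule.inclusion (hGP m) (η m) : ↥P) : M)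
          = ∑ m ∈ DFinsupp.support η, ((η m : ↥(G m.1)) : M) := by
        push_cast
        rfl
      rw [← this]
      exact h0
    -- each component is in D
    have hcomp : ∀ m₀ ∈ DFinsupp.support η, ((η m₀ : ↥(G m₀.1)) : M) ∈ D m₀.1 := by
      intro m₀ hm₀
      refine inj_core F hdec hflat α hα m₀.2 (η m₀).2 ?_
      set T := {c : Fin r → ℕ |
        ((∑ i, α i * (c i : ℝ)) = t ∧ c ≠ m₀.1) ∨ t < ∑ i, α i * (c i : ℝ)} with hT
      set W := ⨆ c ∈ T, interF F (fun i => (c i : ℤ)) with hW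
      have hQW : Q ≤ W := by
        refine le_trans (Gt_le_bigsup F α) (iSup₂_le fun b hb => ?_)
        exact le_iSup₂ (f := fun (c : Fin r → ℕ) (_ : c ∈ T) =>
          interF F (fun i => (c i : ℤ))) b (Or.inr hb)
      have hGW : ∀ m : Λ, m ≠ m₀ → G m.1 ≤ W := by
        intro m hne
        exact le_iSup₂ (f := fun (c : Fin r → ℕ) (_ : c ∈ T) =>
          interF F (fun i => (c i : ℤ))) m.1
          (Or.inl ⟨m.2, fun h => hne (Subtype.ext h)⟩)
      have hdecomp : ((η m₀ : ↥(G m₀.1)) : M)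
          = (∑ m ∈ DFinsupp.support η, ((η m : ↥(G m.1)) : M))
            - ∑ m ∈ (DFinsupp.support η).erase m₀, ((η m : ↥(G m.1)) : M) := by
        rw [← Finset.add_sum_erase _ _ hm₀]
        abel
      rw [hdecomp]
      refine sub_mem (hQW hmem) (Submodule.sum_mem _ fun m hm => ?_)
      exact hGW m (Finset.ne_of_mem_erase hm) (η m).2
    have hzero : quotDS η = 0 := by
      conv_lhs => rw [← DirectSum.sum_support_of η]
      rw [map_sum]
      refine Finset.sum_eq_zero fun m hm => ?_
      rw [← DirectSum.lof_eq_of Rg, hqds, DirectSum.toModule_lof]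
      have : (D' m).mkQ (η m) = 0 :=
        (Submodule.Quotient.mk_eq_zero _).mpr (hcomp m hm)
      rw [LinearMap.comp_apply, this, map_zero]
    rw [hzero]
  exact ⟨(LinearEquiv.ofBijective φ ⟨hinj, hsurj⟩).symm⟩
end

section
/- Let A be a Noetherian local ring with maximal ideal 𝔪, and let C_• : 0 → C_r → ... → C_1 → C_0 → 0 be a complex of finitely generated A-modules such that each C_p is Cohen–Macaulay with support equal to Spec A (i.e., maximal Cohen–Macaulay), and such that H_p(C_•) = 0 for p > 0. Let L = H_0(C_•). If dim(Supp L) ≤ dim A − r, then L is Cohen–Macaulay of dimension exactly dim A − r (or L = 0); in particular depth(L) ≥ dim A − r. -/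
/-!
STATEMENT 15: Let `(A, 𝔪)` be Noetherian local of dimension `d`, and
`C_• : 0 → C_r → ⋯ → C_1 → C_0 → 0` a complex of finitely generated `A`-modules, each
`C_p` maximal Cohen–Macaulay (support `Spec A`, i.e. `dim A/ann(C_p) = dim A`, and depth
`≥ d`, rendered by a regular sequence on `C_p` of length `d` in `𝔪`), with `H_p = 0` for
`p > 0`. Let `L = H₀(C_•) = C₀/im(d₀)`. If `dim Supp L ≤ d − r` then `L = 0` or `L` is
Cohen–Macaulay of dimension exactly `d − r`; in particular `depth L ≥ d − r` (there is a
regular sequence on `L` of length `d − r` in `𝔪`).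
-/

set_option linter.unusedSectionVars false
set_option linter.unusedVariables false

open RingTheory.Sequence IsLocalRing Pointwise Submodule

variable {A : Type} [CommRing A] 

section Basic
variable {M : Type} [AddCommGroup M] [Module A M]

lemma isSMulRegular_of_smul_eq_zero {x : A}
    (h : ∀ m : M, x • m = 0 → m = 0) : IsSMulRegular M x := by
  intro a b hab
  have : x • (a - b) = 0 := by simp only [smul_sub, hab, sub_self]
  exact sub_eq_zero.mp (h _ this)

lemma isAssociatedPrime_iff_ann [IsNoetherianRing A] {I : Ideal A} :
    IsAssociatedPrime I M ↔ I.IsPrime ∧ ∃ v : M, I = (A ∙ v).annihilator := by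
  rw [isAssociatedPrime_iff]
  have h : ∀ v : M, (⊥ : Submodule A M).colon {v} = (A ∙ v).annihilator := by
    intro v; ext y
    rw [Submodule.mem_colon_singleton, Submodule.mem_annihilator_span_singleton,
      Submodule.mem_bot]
  simp only [h]

end Basic

section Ass
variable {M : Type} [AddCommGroup M] [Module A M]

lemma ass_subset_sub_quot [IsNoetherianRing A] (N : Submodule A M) :
    associatedPrimes A M ⊆ associatedPrimes A N ∪ associatedPrimes A (M ⧸ N) := by
  intro q hq0
  obtain ⟨hq, v, rfl⟩ := isAssociatedPrime_iff_ann.mp hq0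
  by_cases hcap : ∃ a : A, a • v ∈ N ∧ a • v ≠ 0
  · left
    obtain ⟨a, haN, ha0⟩ := hcap
    have hanq : a ∉ (A ∙ v).annihilator := fun h =>
      ha0 ((Submodule.mem_annihilator_span_singleton _ _).mp h)
    refine isAssociatedPrime_iff_ann.mpr ⟨hq, ⟨a • v, haN⟩, ?_⟩
    ext y
    rw [Submodule.mem_annihilator_span_singleton,
      Submodule.mem_annihilator_span_singleton]
    constructor
    · intro hy
      rw [Subtype.ext_iff]
      show y • (a • v) = 0
      rw [smul_comm, hy, smul_zero]
    · intro h'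
      have : (y * a) • v = 0 := by
        rw [mul_smul]
        have := congrArg (Subtype.val) h'
        simpa using this
      have : y * a ∈ (A ∙ v).annihilator :=
        (Submodule.mem_annihilator_span_singleton _ _).mpr this
      rcases hq.mem_or_mem this with h | h
      · exact (Submodule.mem_annihilator_span_singleton _ _).mp h
      · exact absurd h hanq
  · right
    push_neg at hcap
    refine isAssociatedPrime_iff_ann.mpr ⟨hq, Submodule.Quotient.mk v, ?_⟩
    ext y
    rw [Submodule.mem_annihilator_span_singleton,
      Submodule.mem_annihilator_span_singleton]
    constructor
    · intro hy
      rw [← Submodule.Quotient.mk_smul, hy, Submodule.Quotient.mk_zero]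
    · intro h'
      rw [← Submodule.Quotient.mk_smul, Submodule.Quotient.mk_eq_zero] at h'
      exact hcap y h'

lemma ass_span_singleton_subset [IsNoetherianRing A] {v : M}
    (hp : ((A ∙ v).annihilator).IsPrime) :
    associatedPrimes A (A ∙ v) ⊆ {(A ∙ v).annihilator} := by
  intro q hq0
  obtain ⟨hq, s, rfl⟩ := isAssociatedPrime_iff_ann.mp hq0
  obtain ⟨a, ha⟩ := Submodule.mem_span_singleton.mp s.2
  have hs : (s : M) = a • v := ha.symm
  have hanp : a ∉ (A ∙ v).annihilator := by
    intro h
    have : a • v = 0 := (Submodule.mem_annihilator_span_singleton _ _).mp h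
    have hs0 : s = 0 := Subtype.ext (by rw [hs, this]; rfl)
    apply hq.ne_top
    rw [hs0]
    rw [eq_top_iff]
    intro y _
    rw [Submodule.mem_annihilator_span_singleton, smul_zero]
  show (A ∙ s).annihilator = (A ∙ v).annihilator
  ext y
  rw [Submodule.mem_annihilator_span_singleton,
    Submodule.mem_annihilator_span_singleton]
  constructor
  · intro hy
    have : (y * a) • v = 0 := by
      rw [mul_smul, ← hs]
      have := congrArg (Subtype.val) hy
      simpa using this
    have := (Submodule.mem_annihilator_span_singleton _ _).mpr this
    rcases hp.mem_or_mem this with h | h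
    · exact (Submodule.mem_annihilator_span_singleton _ _).mp h
    · exact absurd h hanp
  · intro hy
    rw [Subtype.ext_iff]
    show y • (s : M) = 0
    rw [hs, smul_comm, hy, smul_zero]

lemma ass_quot_finite [IsNoetherianRing A] [Module.Finite A M] (N : Submodule A M) :
    (associatedPrimes A (M ⧸ N)).Finite := by
  induction N using IsNoetherian.induction with
  | _ N IH =>
    by_cases hs : Subsingleton (M ⧸ N)
    · rw [associatedPrimes.eq_empty_of_subsingleton]
      exact Set.finite_empty
    have : Nontrivial (M ⧸ N) := not_subsingleton_iff_nontrivial.mp hs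
    obtain ⟨p, hp⟩ := associatedPrimes.nonempty A (M ⧸ N)
    obtain ⟨hprime, w, hw⟩ := isAssociatedPrime_iff_ann.mp hp
    have hw0 : w ≠ 0 := by
      rintro rfl
      apply hprime.ne_top
      rw [hw, eq_top_iff]
      intro y _
      rw [Submodule.mem_annihilator_span_singleton, smul_zero]
    set S : Submodule A (M ⧸ N) := A ∙ w with hS
    set N' : Submodule A M := S.comap N.mkQ with hN'
    have hNN' : N < N' := by
      rw [SetLike.lt_iff_le_and_exists]
      constructor
      · intro x hx
        simp only [hN', Submodule.mem_comap]
        have hx0 : N.mkQ x = 0 := by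
          rw [Submodule.mkQ_apply, Submodule.Quotient.mk_eq_zero]; exact hx
        rw [hx0]; exact Submodule.zero_mem _
      · obtain ⟨m, hm⟩ := N.mkQ_surjective w
        refine ⟨m, ?_, ?_⟩
        · simp only [hN', Submodule.mem_comap, hm]
          exact Submodule.mem_span_singleton_self w
        · intro hmN
          apply hw0
          rw [← hm, Submodule.mkQ_apply, Submodule.Quotient.mk_eq_zero]
          exact hmN
    have hmap : N'.map N.mkQ = S := by
      rw [hN', Submodule.map_comap_eq, Submodule.range_mkQ, top_inf_eq]
    have hsub := ass_subset_sub_quot (M := M ⧸ N) S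
    have h1 : (associatedPrimes A S).Finite :=
      Set.Finite.subset (Set.finite_singleton _) (ass_span_singleton_subset (hw ▸ hprime))
    have e : ((M ⧸ N) ⧸ S) ≃ₗ[A] (M ⧸ N') := by
      rw [← hmap]
      exact Submodule.quotientQuotientEquivQuotient N N' hNN'.le
    have h2 : (associatedPrimes A ((M ⧸ N) ⧸ S)).Finite := by
      rw [LinearEquiv.AssociatedPrimes.eq e]
      exact IH N' hNN'
    exact Set.Finite.subset (h1.union h2) hsub

lemma ass_finite [IsNoetherianRing A] [Module.Finite A M] :
    (associatedPrimes A M).Finite := by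
  have e : (M ⧸ (⊥ : Submodule A M)) ≃ₗ[A] M := Submodule.quotEquivOfEqBot _ rfl
  rw [← LinearEquiv.AssociatedPrimes.eq e]
  exact ass_quot_finite ⊥

end Ass

section Local
variable [IsLocalRing A] [IsNoetherianRing A]
variable {M : Type} [AddCommGroup M] [Module A M]

open IsLocalRing

lemma avoid_finitely_many_primes {s : Set (Ideal A)} (hs : s.Finite)
    (hprime : ∀ p ∈ s, p.IsPrime) (hne : ∀ p ∈ s, p ≠ maximalIdeal A) :
    ∃ x ∈ maximalIdeal A, ∀ p ∈ s, x ∉ p := by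
  by_contra hcon
  push_neg at hcon
  have hsubset : (maximalIdeal A : Set A) ⊆ ⋃ p ∈ hs.toFinset, (p : Set A) := by
    intro x hx
    obtain ⟨p, hp, hxp⟩ := hcon x hx
    exact Set.mem_biUnion (hs.mem_toFinset.mpr hp) hxp
  have := (Ideal.subset_union_prime (⊤ : Ideal A) ⊤ (fun p hp _ _ =>
    hprime p (hs.mem_toFinset.mp hp))).mp hsubset
  obtain ⟨p, hp, hle⟩ := this
  have hps : p ∈ s := hs.mem_toFinset.mp hp
  exact hne p hps (((maximalIdeal.isMaximal A).eq_of_le (hprime p hps).ne_top hle).symm)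

lemma maximal_mem_ass_iff :
    maximalIdeal A ∈ associatedPrimes A M ↔
      ∃ v : M, v ≠ 0 ∧ ∀ w ∈ maximalIdeal A, w • v = 0 := by
  constructor
  · intro hpv
    obtain ⟨hp, v, hv⟩ := isAssociatedPrime_iff_ann.mp hpv
    refine ⟨v, ?_, ?_⟩
    · rintro rfl
      apply hp.ne_top
      rw [hv, eq_top_iff]
      intro y _
      rw [Submodule.mem_annihilator_span_singleton, smul_zero]
    · intro w hw
      rw [hv] at hw
      exact (Submodule.mem_annihilator_span_singleton _ _).mp hw
  · rintro ⟨v, hv0, hv⟩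
    refine isAssociatedPrime_iff_ann.mpr ⟨IsLocalRing.maximalIdeal.isMaximal A |>.isPrime, v, ?_⟩
    apply le_antisymm
    · intro w hw
      exact (Submodule.mem_annihilator_span_singleton _ _).mpr (hv w hw)
    · intro w hw
      by_contra hwm
      have hunit : IsUnit w := by
        exact IsLocalRing.notMem_maximalIdeal.mp hwm
      have : w • v = 0 := (Submodule.mem_annihilator_span_singleton _ _).mp hw
      obtain ⟨u, hu⟩ := hunit
      apply hv0
      have := congrArg (fun m => (u⁻¹ : Aˣ) • m) this
      simpa [← hu, ← Units.smul_def, smul_smul] using this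

/-- From finitely many modules each avoiding `𝔪` in their associated primes,
find a common regular element in `𝔪`. -/
lemma exists_common_regular (M₁ M₂ M₃ : Type)
    [AddCommGroup M₁] [Module A M₁] [Module.Finite A M₁]
    [AddCommGroup M₂] [Module A M₂] [Module.Finite A M₂]
    [AddCommGroup M₃] [Module A M₃] [Module.Finite A M₃]
    (h₁ : maximalIdeal A ∉ associatedPrimes A M₁)
    (h₂ : maximalIdeal A ∉ associatedPrimes A M₂)
    (h₃ : maximalIdeal A ∉ associatedPrimes A M₃) :
    ∃ x ∈ maximalIdeal A,
      IsSMulRegular M₁ x ∧ IsSMulRegular M₂ x ∧ IsSMulRegular M₃ x := by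
  set s := associatedPrimes A M₁ ∪ associatedPrimes A M₂ ∪ associatedPrimes A M₃ with hs
  have hfin : s.Finite := ((ass_finite.union ass_finite).union ass_finite)
  have hprime : ∀ p ∈ s, p.IsPrime := by
    rintro p ((hp | hp) | hp) <;> exact hp.isPrime
  have hne : ∀ p ∈ s, p ≠ maximalIdeal A := by
    rintro p hp rfl
    rcases hp with (hp | hp) | hp
    exacts [h₁ hp, h₂ hp, h₃ hp]
  obtain ⟨x, hxm, hx⟩ := avoid_finitely_many_primes hfin hprime hne
  have key : ∀ (N : Type) [AddCommGroup N] [Module A N],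
      associatedPrimes A N ⊆ s → IsSMulRegular N x := by
    intro N _ _ hsub
    apply isSMulRegular_of_smul_eq_zero
    intro m hm
    by_contra hm0
    have : x ∈ {r : A | ∃ y : N, y ≠ 0 ∧ r • y = 0} := ⟨m, hm0, hm⟩
    rw [← biUnion_associatedPrimes_eq_zero_divisors] at this
    obtain ⟨p, hp, hxp⟩ := Set.mem_iUnion₂.mp this
    exact hx p (hsub hp) hxp
  exact ⟨x, hxm,
    key M₁ (fun p hp => Or.inl (Or.inl hp)),
    key M₂ (fun p hp => Or.inl (Or.inr hp)),
    key M₃ (fun p hp => Or.inr hp)⟩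

end Local

section Key
variable {M : Type} [AddCommGroup M] [Module A M]

lemma IsSMulRegular.eq_zero' {N : Type} [AddCommGroup N] [Module A N] {z : A}
    (h : IsSMulRegular N z) {q : N} (hq : z • q = 0) : q = 0 :=
  h (show z • q = z • 0 by rw [hq, smul_zero])

lemma mem_smul_top_iff' (x : A) (v : M) :
    v ∈ x • (⊤ : Submodule A M) ↔ ∃ c : M, v = x • c := by
  have : v ∈ x • (⊤ : Submodule A M) ↔ v ∈ x • ((⊤ : Submodule A M) : Set M) :=
    Iff.of_eq (congrArg (v ∈ ·) (Submodule.coe_pointwise_smul x ⊤))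
  rw [this]
  constructor
  · rintro ⟨c, -, rfl⟩
    exact ⟨c, rfl⟩
  · rintro ⟨c, rfl⟩
    exact ⟨c, trivial, rfl⟩

lemma key_lemma {x y z : A} (hx : IsSMulRegular M x) (hy : IsSMulRegular M y)
    (hz : IsSMulRegular (QuotSMulTop y M) z) {v : M}
    (hyv : y • v ∈ x • (⊤ : Submodule A M)) (hzv : z • v ∈ x • (⊤ : Submodule A M)) :
    v ∈ x • (⊤ : Submodule A M) := by
  obtain ⟨a, ha⟩ := (mem_smul_top_iff' x _).mp hyv
  obtain ⟨b, hb⟩ := (mem_smul_top_iff' x _).mp hzv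
  have hza : z • a = y • b := by
    apply hx
    show x • (z • a) = x • (y • b)
    rw [smul_comm x z, ← ha, smul_comm z y, smul_comm x y, ← hb, smul_comm y z]
  have hma : (Submodule.Quotient.mk a : QuotSMulTop y M) = 0 := by
    apply hz.eq_zero'
    rw [← Submodule.Quotient.mk_smul, hza, Submodule.Quotient.mk_eq_zero]
    exact (mem_smul_top_iff' y _).mpr ⟨b, rfl⟩
  rw [Submodule.Quotient.mk_eq_zero] at hma
  obtain ⟨c, hc⟩ := (mem_smul_top_iff' y _).mp hma
  refine (mem_smul_top_iff' x _).mpr ⟨c, ?_⟩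
  apply hy
  show y • v = y • (x • c)
  rw [ha, hc, smul_comm x y]

lemma swap_smul_regular {a b : A} (h1 : IsSMulRegular M a)
    (h2 : IsSMulRegular (QuotSMulTop a M) b) (_h3 : IsSMulRegular M b) :
    IsSMulRegular (QuotSMulTop b M) a := by
  apply isSMulRegular_of_smul_eq_zero
  intro q hq
  obtain ⟨v, rfl⟩ := Submodule.Quotient.mk_surjective _ q
  rw [← Submodule.Quotient.mk_smul, Submodule.Quotient.mk_eq_zero] at hq
  obtain ⟨c, hc⟩ := (mem_smul_top_iff' b _).mp hq
  have hmc : (Submodule.Quotient.mk c : QuotSMulTop a M) = 0 := by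
    apply h2.eq_zero'
    rw [← Submodule.Quotient.mk_smul, Submodule.Quotient.mk_eq_zero]
    refine (mem_smul_top_iff' a _).mpr ⟨v, ?_⟩
    rw [← hc]
  rw [Submodule.Quotient.mk_eq_zero] at hmc
  obtain ⟨c', hc'⟩ := (mem_smul_top_iff' a _).mp hmc
  rw [Submodule.Quotient.mk_eq_zero]
  refine (mem_smul_top_iff' b _).mpr ⟨c', ?_⟩
  apply h1
  show a • v = a • (b • c')
  rw [hc, hc', smul_comm b a]

/-- Commuting two successive `QuotSMulTop`s. -/
noncomputable def quotQuotEquivSup (a b : A) :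
    QuotSMulTop b (QuotSMulTop a M) ≃ₗ[A]
      M ⧸ (a • ⊤ ⊔ b • (⊤ : Submodule A M)) :=
  (Submodule.quotEquivOfEq _ _
    (by rw [Submodule.map_pointwise_smul, Submodule.map_top, Submodule.range_mkQ])) ≪≫ₗ
  Submodule.quotientQuotientEquivQuotientSup (a • ⊤) (b • ⊤)

noncomputable def quotSMulTopComm (a b : A) :
    QuotSMulTop b (QuotSMulTop a M) ≃ₗ[A] QuotSMulTop a (QuotSMulTop b M) :=
  quotQuotEquivSup a b ≪≫ₗ (Submodule.quotEquivOfEq _ _ (sup_comm _ _)) ≪≫ₗ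
    (quotQuotEquivSup b a).symm

end Key

section TLemma
variable [IsLocalRing A] [IsNoetherianRing A]
open IsLocalRing

lemma not_ass_of_regular {M : Type} [AddCommGroup M] [Module A M] {x : A}
    (hx : x ∈ maximalIdeal A) (hreg : IsSMulRegular M x) :
    maximalIdeal A ∉ associatedPrimes A M := by
  rw [maximal_mem_ass_iff]
  rintro ⟨v, hv0, hv⟩
  exact hv0 (hreg.eq_zero' (hv x hx))

lemma not_ass_quot_of_pair {M : Type} [AddCommGroup M] [Module A M] {x y z : A}
    (hy : y ∈ maximalIdeal A) (hz : z ∈ maximalIdeal A)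
    (hxreg : IsSMulRegular M x) (hyreg : IsSMulRegular M y)
    (hzreg : IsSMulRegular (QuotSMulTop y M) z) :
    maximalIdeal A ∉ associatedPrimes A (QuotSMulTop x M) := by
  rw [maximal_mem_ass_iff]
  rintro ⟨q, hq0, hq⟩
  obtain ⟨v, rfl⟩ := Submodule.Quotient.mk_surjective _ q
  apply hq0
  rw [Submodule.Quotient.mk_eq_zero]
  have hyv : y • v ∈ x • (⊤ : Submodule A M) := by
    rw [← Submodule.Quotient.mk_eq_zero, Submodule.Quotient.mk_smul]
    exact hq y hy
  have hzv : z • v ∈ x • (⊤ : Submodule A M) := by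
    rw [← Submodule.Quotient.mk_eq_zero, Submodule.Quotient.mk_smul]
    exact hq z hz
  exact key_lemma hxreg hyreg hzreg hyv hzv

lemma T_lemma (n : ℕ) :
    ∀ (M : Type) [AddCommGroup M] [Module A M] [Module.Finite A M]
      (ys : List A), ys.length = n → (∀ y ∈ ys, y ∈ maximalIdeal A) →
      IsWeaklyRegular M ys → ∀ x ∈ maximalIdeal A, IsSMulRegular M x →
      ∃ zs : List A, zs.length = n - 1 ∧ (∀ z ∈ zs, z ∈ maximalIdeal A) ∧
        IsWeaklyRegular (QuotSMulTop x M) zs := by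
  induction n using Nat.strong_induction_on with
  | _ n IH =>
    intro M _ _ _ ys hlen hym hreg x hx hxreg
    match ys, hlen with
    | [], hlen =>
      exact ⟨[], by simp [← hlen], by simp, IsWeaklyRegular.nil A _⟩
    | [y], hlen =>
      exact ⟨[], by simp [← hlen], by simp, IsWeaklyRegular.nil A _⟩
    | y₁ :: y₂ :: rest, hlen =>
      have hn2 : 2 ≤ n := by simp only [List.length_cons] at hlen; omega
      rw [isWeaklyRegular_cons_iff] at hreg
      obtain ⟨hy₁, hreg'⟩ := hreg
      have hy₂ : IsSMulRegular (QuotSMulTop y₁ M) y₂ :=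
        ((isWeaklyRegular_cons_iff _ _ _).mp hreg').1
      have hy₁m : y₁ ∈ maximalIdeal A := hym y₁ (by simp)
      have hy₂m : y₂ ∈ maximalIdeal A := hym y₂ (by simp)
      -- choose z regular on M, M/xM, M/y₁M
      obtain ⟨z, hzm, hzM, hzMx, hzMy₁⟩ :=
        exists_common_regular M (QuotSMulTop x M) (QuotSMulTop y₁ M)
          (not_ass_of_regular hy₁m hy₁)
          (not_ass_quot_of_pair hy₁m hy₂m hxreg hy₁ hy₂)
          (not_ass_of_regular hy₂m hy₂)
      -- step A : apply IH to M/y₁M with sequence y₂ :: rest and element z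
      have hlen' : (y₂ :: rest).length = n - 1 := by
        simp only [List.length_cons] at hlen ⊢; omega
      obtain ⟨ws, hwslen, hwsm, hws⟩ :=
        IH (n-1) (by omega) (QuotSMulTop y₁ M) (y₂ :: rest) hlen'
          (fun y hy => hym y (by simp [hy] )) hreg' z hzm hzMy₁
      -- (y₁, z, ws) is weakly regular on M
      have hseqM : IsWeaklyRegular M (y₁ :: z :: ws) :=
        .cons hy₁ (.cons hzMy₁ hws)
      -- swap to get (y₁, ws) weakly regular on M/zM
      have hy₁z : IsSMulRegular (QuotSMulTop z M) y₁ :=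
        swap_smul_regular hy₁ hzMy₁ hzM
      have hwsz : IsWeaklyRegular (QuotSMulTop y₁ (QuotSMulTop z M)) ws :=
        ((quotSMulTopComm y₁ z).isWeaklyRegular_congr ws).mp hws
      have hseqz : IsWeaklyRegular (QuotSMulTop z M) (y₁ :: ws) :=
        .cons hy₁z hwsz
      -- x is regular on M/zM
      have hxz : IsSMulRegular (QuotSMulTop z M) x :=
        swap_smul_regular hxreg hzMx hzM
      -- step B : apply IH to M/zM with sequence (y₁ :: ws) and element x
      have hlen'' : (y₁ :: ws).length = n - 1 := by
        simp only [List.length_cons, hwslen]; omega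
      obtain ⟨us, huslen, husm, hus⟩ :=
        IH (n-1) (by omega) (QuotSMulTop z M) (y₁ :: ws) hlen''
          (by intro u hu
              rcases List.mem_cons.mp hu with rfl | hu
              exacts [hy₁m, hwsm u hu])
          hseqz x hx hxz
      -- transfer us to QuotSMulTop z (QuotSMulTop x M)
      have hust : IsWeaklyRegular (QuotSMulTop z (QuotSMulTop x M)) us :=
        ((quotSMulTopComm x z).isWeaklyRegular_congr us).mpr hus
      refine ⟨z :: us, ?_, ?_, .cons hzMx hust⟩
      · simp only [List.length_cons, huslen]; omega
      · intro u hu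
        rcases List.mem_cons.mp hu with rfl | hu
        exacts [hzm, husm u hu]

end TLemma

section DepthLemma
variable [IsLocalRing A] [IsNoetherianRing A]
open IsLocalRing

lemma key_lemma_rel {M₁ M₂ : Type} [AddCommGroup M₁] [Module A M₁]
    [AddCommGroup M₂] [Module A M₂] (f : M₁ →ₗ[A] M₂) (hf : Function.Injective f)
    {y z : A} (hyM₂ : IsSMulRegular M₂ y)
    (hz : IsSMulRegular (QuotSMulTop y M₁) z) {v : M₂}
    (hyv : y • v ∈ LinearMap.range f) (hzv : z • v ∈ LinearMap.range f) :
    v ∈ LinearMap.range f := by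
  obtain ⟨a, ha⟩ := hyv
  obtain ⟨b, hb⟩ := hzv
  have hza : z • a = y • b := by
    apply hf
    rw [map_smul, map_smul, ha, hb, smul_comm]
  have hma : (Submodule.Quotient.mk a : QuotSMulTop y M₁) = 0 := by
    apply hz.eq_zero'
    rw [← Submodule.Quotient.mk_smul, hza, Submodule.Quotient.mk_eq_zero]
    exact (mem_smul_top_iff' y _).mpr ⟨b, rfl⟩
  rw [Submodule.Quotient.mk_eq_zero] at hma
  obtain ⟨c, hc⟩ := (mem_smul_top_iff' y _).mp hma
  refine ⟨c, ?_⟩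
  apply hyM₂
  show y • (f c) = y • v
  rw [← map_smul, ← hc, ha]

lemma depth_lemma (n : ℕ) :
    ∀ (M₁ M₂ M₃ : Type) [AddCommGroup M₁] [Module A M₁] [Module.Finite A M₁]
      [AddCommGroup M₂] [Module A M₂] [Module.Finite A M₂]
      [AddCommGroup M₃] [Module A M₃] [Module.Finite A M₃]
      (f : M₁ →ₗ[A] M₂) (g : M₂ →ₗ[A] M₃),
      Function.Injective f → Function.Surjective g →
      LinearMap.ker g = LinearMap.range f →
      ∀ ys₁ : List A, ys₁.length = n + 1 → (∀ y ∈ ys₁, y ∈ maximalIdeal A) →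
        IsWeaklyRegular M₁ ys₁ →
      ∀ ys₂ : List A, ys₂.length = n → (∀ y ∈ ys₂, y ∈ maximalIdeal A) →
        IsWeaklyRegular M₂ ys₂ →
      ∃ zs : List A, zs.length = n ∧ (∀ z ∈ zs, z ∈ maximalIdeal A) ∧
        IsWeaklyRegular M₃ zs := by
  induction n using Nat.strong_induction_on with
  | _ n IH =>
    intro M₁ M₂ M₃ _ _ _ _ _ _ _ _ _ f g hf hg hfg ys₁ hlen₁ hym₁ hreg₁
      ys₂ hlen₂ hym₂ hreg₂
    rcases Nat.eq_zero_or_pos n with rfl | hn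
    · exact ⟨[], rfl, by simp, IsWeaklyRegular.nil A _⟩
    rcases ys₁ with _ | ⟨a₁, _ | ⟨a₂, t₁⟩⟩
    · simp at hlen₁
    · simp at hlen₁; omega
    rcases ys₂ with _ | ⟨b₁, t₂⟩
    · simp at hlen₂; omega
    have ha₁m : a₁ ∈ maximalIdeal A := hym₁ a₁ (by simp)
    have ha₂m : a₂ ∈ maximalIdeal A := hym₁ a₂ (by simp)
    have hb₁m : b₁ ∈ maximalIdeal A := hym₂ b₁ (by simp)
    rw [isWeaklyRegular_cons_iff] at hreg₁ hreg₂
    obtain ⟨ha₁, hreg₁'⟩ := hreg₁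
    obtain ⟨hb₁, hreg₂'⟩ := hreg₂
    have ha₂ : IsSMulRegular (QuotSMulTop a₁ M₁) a₂ :=
      ((isWeaklyRegular_cons_iff _ _ _).mp hreg₁').1
    -- choose y regular on M₁ and M₂
    obtain ⟨y, hym, hyM₁, hyM₂, -⟩ :=
      exists_common_regular M₁ M₂ M₂
        (not_ass_of_regular ha₁m ha₁) (not_ass_of_regular hb₁m hb₁)
        (not_ass_of_regular hb₁m hb₁)
    -- choose z regular on M₁/yM₁
    obtain ⟨z, hzm, hzq, -, -⟩ :=
      exists_common_regular (QuotSMulTop y M₁) M₂ M₂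
        (not_ass_quot_of_pair ha₁m ha₂m hyM₁ ha₁ ha₂)
        (not_ass_of_regular hb₁m hb₁) (not_ass_of_regular hb₁m hb₁)
    -- 𝔪 ∉ Ass M₃
    have hM₃ : maximalIdeal A ∉ associatedPrimes A M₃ := by
      rw [maximal_mem_ass_iff]
      rintro ⟨v₃, hv₃0, hv₃⟩
      obtain ⟨v₂, rfl⟩ := hg v₃
      apply hv₃0
      have hrange : v₂ ∈ LinearMap.range f := by
        apply key_lemma_rel f hf hyM₂ hzq
        · rw [← hfg, LinearMap.mem_ker, map_smul]
          exact hv₃ y hym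
        · rw [← hfg, LinearMap.mem_ker, map_smul]
          exact hv₃ z hzm
      rw [← hfg, LinearMap.mem_ker] at hrange
      exact hrange
    -- choose x regular on M₁, M₂, M₃
    obtain ⟨x, hxm, hxM₁, hxM₂, hxM₃⟩ :=
      exists_common_regular M₁ M₂ M₃
        (not_ass_of_regular ha₁m ha₁) (not_ass_of_regular hb₁m hb₁) hM₃
    -- induced exact sequence on quotients
    set f' : QuotSMulTop x M₁ →ₗ[A] QuotSMulTop x M₂ := QuotSMulTop.map x f with hf'def
    set g' : QuotSMulTop x M₂ →ₗ[A] QuotSMulTop x M₃ := QuotSMulTop.map x g with hg'def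
    have hf' : Function.Injective f' := by
      rw [← LinearMap.ker_eq_bot, eq_bot_iff]
      rintro q hq
      obtain ⟨v₁, rfl⟩ := Submodule.Quotient.mk_surjective _ q
      rw [LinearMap.mem_ker, hf'def, QuotSMulTop.map_apply_mk,
        Submodule.Quotient.mk_eq_zero] at hq
      obtain ⟨v₂, hv₂⟩ := (mem_smul_top_iff' x _).mp hq
      have hgv₂ : g v₂ = 0 := by
        apply hxM₃.eq_zero'
        rw [← map_smul, ← hv₂, ← LinearMap.comp_apply]
        have : g.comp f = 0 := by
          ext w
          simp only [LinearMap.comp_apply, LinearMap.zero_apply]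
          have : f w ∈ LinearMap.ker g := by rw [hfg]; exact ⟨w, rfl⟩
          exact this
        rw [this, LinearMap.zero_apply]
      obtain ⟨u, hu⟩ : v₂ ∈ LinearMap.range f := by
        rw [← hfg, LinearMap.mem_ker]; exact hgv₂
      have : f v₁ = f (x • u) := by rw [map_smul, hu, ← hv₂]
      have hv₁ : v₁ = x • u := hf this
      show _ ∈ (⊥ : Submodule A (QuotSMulTop x M₁))
      rw [Submodule.mem_bot, Submodule.Quotient.mk_eq_zero, hv₁]
      exact (mem_smul_top_iff' x _).mpr ⟨u, rfl⟩
    have hg' : Function.Surjective g' := QuotSMulTop.map_surjective x hg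
    have hfg' : LinearMap.ker g' = LinearMap.range f' := by
      rw [← LinearMap.exact_iff]
      exact QuotSMulTop.map_exact x (LinearMap.exact_iff.mpr hfg) hg
    -- regular sequences on the quotients via T_lemma
    obtain ⟨qs₁, hqs₁len, hqs₁m, hqs₁⟩ :=
      T_lemma (n+1) M₁ (a₁ :: a₂ :: t₁) hlen₁ hym₁
        (by rw [isWeaklyRegular_cons_iff]; exact ⟨ha₁, hreg₁'⟩) x hxm hxM₁
    obtain ⟨qs₂, hqs₂len, hqs₂m, hqs₂⟩ :=
      T_lemma n M₂ (b₁ :: t₂) hlen₂ hym₂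
        (by rw [isWeaklyRegular_cons_iff]; exact ⟨hb₁, hreg₂'⟩) x hxm hxM₂
    -- apply induction hypothesis at n - 1
    obtain ⟨zs', hzs'len, hzs'm, hzs'⟩ :=
      IH (n-1) (by omega) (QuotSMulTop x M₁) (QuotSMulTop x M₂) (QuotSMulTop x M₃)
        f' g' hf' hg' hfg'
        qs₁ (by omega) hqs₁m hqs₁
        qs₂ (by omega) hqs₂m hqs₂
    refine ⟨x :: zs', by simp [hzs'len]; omega, ?_, .cons hxM₃ hzs'⟩
    intro u hu
    rcases List.mem_cons.mp hu with rfl | hu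
    exacts [hxm, hzs'm u hu]

end DepthLemma

section Dim
variable [IsLocalRing A] [IsNoetherianRing A]
open IsLocalRing

/-- The `q`-torsion submodule. -/
def qTorsion (q : Ideal A) (M : Type) [AddCommGroup M] [Module A M] : Submodule A M where
  carrier := {m | ∀ a ∈ q, a • m = 0}
  add_mem' := by intro m m' hm hm' a ha; rw [smul_add, hm a ha, hm' a ha, add_zero]
  zero_mem' := by intro a ha; rw [smul_zero]
  smul_mem' := by intro c m hm a ha; rw [smul_comm, hm a ha, smul_zero]

lemma dim_chain (n : ℕ) :
    ∀ (M : Type) [AddCommGroup M] [Module A M] [Module.Finite A M]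
      (rs : List A), rs.length = n → (∀ x ∈ rs, x ∈ maximalIdeal A) →
      IsWeaklyRegular M rs →
      ∀ q ∈ associatedPrimes A M,
      ∃ c : LTSeries (PrimeSpectrum A), c.length = n ∧ c.head.asIdeal = q := by
  induction n with
  | zero =>
    intro M _ _ _ rs _ _ _ q hq
    exact ⟨RelSeries.singleton _ ⟨q, hq.isPrime⟩, rfl, rfl⟩
  | succ n IH =>
    intro M _ _ _ rs hlen hmem hreg q hq
    rcases rs with _ | ⟨x, rest⟩
    · simp at hlen
    have hxm : x ∈ maximalIdeal A := hmem x (by simp)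
    rw [isWeaklyRegular_cons_iff] at hreg
    obtain ⟨hxreg, hrest⟩ := hreg
    obtain ⟨hqprime, v, hv⟩ := isAssociatedPrime_iff_ann.mp hq
    have hv0 : v ≠ 0 := by
      rintro rfl
      apply hqprime.ne_top
      rw [hv, eq_top_iff]
      intro y _
      rw [Submodule.mem_annihilator_span_singleton, smul_zero]
    have hxq : x ∉ q := by
      intro hxq
      rw [hv, Submodule.mem_annihilator_span_singleton] at hxq
      exact hv0 (hxreg.eq_zero' hxq)
    set N : Submodule A M := qTorsion q M with hN
    have hvN : v ∈ N := by
      intro a ha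
      rw [hv, Submodule.mem_annihilator_span_singleton] at ha
      exact ha
    haveI : Nontrivial ↥N :=
      ⟨⟨v, hvN⟩, 0, by simp [Subtype.ext_iff, hv0]⟩
    haveI : Module.Finite A ↥N :=
      Module.Finite.iff_fg.mpr (IsNoetherian.noetherian N)
    have hNx : IsSMulRegular ↥N x := by
      apply isSMulRegular_of_smul_eq_zero
      rintro ⟨m, hm⟩ h
      rw [Subtype.ext_iff] at h ⊢
      exact hxreg.eq_zero' h
    -- N/xN is nontrivial by Nakayama
    have hannN : Module.annihilator A ↥N ≠ ⊤ := by
      intro h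
      have : (1 : A) ∈ Module.annihilator A ↥N := h ▸ Submodule.mem_top
      rw [Module.mem_annihilator] at this
      obtain ⟨m, m', hmm'⟩ := exists_pair_ne ↥N
      exact hmm' (by rw [← one_smul A m, ← one_smul A m', this, this])
    have hxjac : x ∈ (Module.annihilator A ↥N).jacobson :=
      (IsLocalRing.jacobson_eq_maximalIdeal _ hannN).symm ▸ hxm
    have htopne : (⊤ : Submodule A ↥N) ≠ x • ⊤ :=
      Submodule.top_ne_pointwise_smul_of_mem_jacobson_annihilator hxjac
    haveI : Nontrivial (QuotSMulTop x ↥N) := by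
      rw [← not_subsingleton_iff_nontrivial]
      intro h
      exact htopne (((Submodule.Quotient.subsingleton_iff (p := _)).mp h).symm)
    obtain ⟨q', hq'⟩ := associatedPrimes.nonempty A (QuotSMulTop x ↥N)
    -- q ⊆ q' strictly
    have hqqann : q ≤ (⊤ : Submodule A (QuotSMulTop x ↥N)).annihilator := by
      intro a ha
      rw [Submodule.mem_annihilator]
      rintro w -
      obtain ⟨⟨m, hm⟩, rfl⟩ := Submodule.Quotient.mk_surjective _ w
      rw [← Submodule.Quotient.mk_smul]
      have : a • (⟨m, hm⟩ : ↥N) = 0 := Subtype.ext (hm a ha)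
      rw [this, Submodule.Quotient.mk_zero]
    have hqq' : q ≤ q' := le_trans hqqann hq'.annihilator_le
    have hxq' : x ∈ q' := by
      apply hq'.annihilator_le
      rw [Submodule.mem_annihilator]
      rintro w -
      obtain ⟨m, rfl⟩ := Submodule.Quotient.mk_surjective _ w
      rw [← Submodule.Quotient.mk_smul, Submodule.Quotient.mk_eq_zero]
      exact (mem_smul_top_iff' x _).mpr ⟨m, rfl⟩
    have hlt : q < q' := lt_of_le_of_ne hqq' (by rintro rfl; exact hxq hxq')
    -- push q' into Ass(M/xM)
    have hle : x • (⊤ : Submodule A ↥N) ≤ (x • (⊤ : Submodule A M)).comap N.subtype := by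
      intro m hm
      obtain ⟨c, hc⟩ := (mem_smul_top_iff' x _).mp hm
      simp only [Submodule.mem_comap, Submodule.coe_subtype]
      refine (mem_smul_top_iff' x _).mpr ⟨↑c, ?_⟩
      rw [hc]; rfl
    set φ : QuotSMulTop x ↥N →ₗ[A] QuotSMulTop x M :=
      Submodule.mapQ _ _ N.subtype hle with hφ
    have hφinj : Function.Injective φ := by
      rw [← LinearMap.ker_eq_bot, eq_bot_iff]
      rintro w hw
      obtain ⟨⟨m, hm⟩, rfl⟩ := Submodule.Quotient.mk_surjective _ w
      rw [LinearMap.mem_ker, hφ, Submodule.mapQ_apply, Submodule.Quotient.mk_eq_zero] at hw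
      obtain ⟨c, hc⟩ := (mem_smul_top_iff' x _).mp hw
      have hcN : c ∈ N := by
        intro a ha
        apply hxreg.eq_zero'
        rw [smul_comm, ← hc]
        exact hm a ha
      show _ ∈ (⊥ : Submodule A (QuotSMulTop x ↥N))
      rw [Submodule.mem_bot, Submodule.Quotient.mk_eq_zero]
      refine (mem_smul_top_iff' x _).mpr ⟨⟨c, hcN⟩, ?_⟩
      rw [Subtype.ext_iff]
      exact hc
    have hq'M : q' ∈ associatedPrimes A (QuotSMulTop x M) :=
      associatedPrimes.subset_of_injective hφinj hq'
    obtain ⟨c, hclen, hchead⟩ :=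
      IH (QuotSMulTop x M) rest (by simpa using hlen)
        (fun y hy => hmem y (by simp [hy])) hrest q' hq'M
    refine ⟨c.cons ⟨q, hqprime⟩ ?_, ?_, ?_⟩
    · show (⟨q, hqprime⟩ : PrimeSpectrum A) < c.head
      rw [← PrimeSpectrum.asIdeal_lt_asIdeal, hchead]
      exact hlt
    · simp [hclen]
    · simp
end Dim

section Dim2
variable [IsLocalRing A] [IsNoetherianRing A]
open IsLocalRing

lemma dim_lower (n : ℕ) (M : Type) [AddCommGroup M] [Module A M]
    [Module.Finite A M] [Nontrivial M]
    (rs : List A) (hlen : rs.length = n) (hmem : ∀ x ∈ rs, x ∈ maximalIdeal A)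
    (hreg : IsWeaklyRegular M rs) :
    (n : WithBot (WithTop ℕ)) ≤ ringKrullDim (A ⧸ Module.annihilator A M) := by
  obtain ⟨q, hq⟩ := associatedPrimes.nonempty A M
  obtain ⟨c, hclen, hchead⟩ := dim_chain n M rs hlen hmem hreg q hq
  set I := Module.annihilator A M with hI
  have hannq : I ≤ q := by
    rw [hI, ← Submodule.annihilator_top]
    exact hq.annihilator_le
  set mk := Ideal.Quotient.mk I with hmkdef
  have hmk : Function.Surjective mk := Ideal.Quotient.mk_surjective
  have hker : ∀ i : Fin (c.length + 1), RingHom.ker mk ≤ (c i).asIdeal := by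
    intro i
    rw [hmkdef, Ideal.mk_ker]
    refine hannq.trans ?_
    rw [← hchead]
    exact c.monotone (Fin.zero_le i)
  have hstrict : ∀ p p' : Ideal A, RingHom.ker mk ≤ p → p < p' →
      Ideal.map mk p < Ideal.map mk p' := by
    intro p p' hp hpp'
    refine lt_of_le_of_ne (Ideal.map_mono hpp'.le) ?_
    intro heq
    have h1 := Ideal.comap_map_of_surjective mk hmk p
    have h2 := Ideal.comap_map_of_surjective mk hmk p'
    rw [heq] at h1
    have : p' ≤ p := by
      intro a ha
      have : a ∈ p' ⊔ Ideal.comap mk ⊥ := le_sup_left (a := p') ha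
      rw [← h2, h1] at this
      rcases Submodule.mem_sup.mp this with ⟨b, hb, z, hz, rfl⟩
      have hzp : z ∈ p := hp (by rw [RingHom.mem_ker]; simpa using hz)
      exact p.add_mem hb hzp
    exact absurd (le_antisymm hpp'.le this) hpp'.ne
  have hprime : ∀ i : Fin (c.length + 1), (Ideal.map mk (c i).asIdeal).IsPrime := by
    intro i
    haveI := (c i).isPrime
    exact Ideal.map_isPrime_of_surjective hmk (hker i)
  set c' : LTSeries (PrimeSpectrum (A ⧸ I)) :=
    ⟨c.length, fun i => ⟨Ideal.map mk (c i).asIdeal, hprime i⟩, by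
      intro i
      exact (PrimeSpectrum.asIdeal_lt_asIdeal _ _).mp
        (hstrict _ _ (hker _) ((PrimeSpectrum.asIdeal_lt_asIdeal _ _).mpr (c.step i)))⟩ with hc'
  have := Order.LTSeries.length_le_krullDim c'
  have hlen' : c'.length = n := by rw [hc']; exact hclen
  rw [hlen'] at this
  exact_mod_cast this
end Dim2

section Res
variable [IsLocalRing A] [IsNoetherianRing A]
open IsLocalRing

lemma isWeaklyRegular_take {M : Type} [AddCommGroup M] [Module A M]
    (rs : List A) (k : ℕ) (h : IsWeaklyRegular M rs) :
    IsWeaklyRegular M (rs.take k) := by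
  have h' : IsWeaklyRegular M (rs.take k ++ rs.drop k) := by
    rwa [List.take_append_drop]
  exact ((isWeaklyRegular_append_iff M _ _).mp h').1

lemma res_lemma (r : ℕ) :
    ∀ (d : ℕ), r ≤ d →
    ∀ (C : ℕ → Type) [∀ p, AddCommGroup (C p)] [∀ p, Module A (C p)]
      [∀ p, Module.Finite A (C p)],
      (∀ p, r < p → Subsingleton (C p)) →
      ∀ (dmap : ∀ p, C (p + 1) →ₗ[A] C p),
      (∀ p, p ≤ r → ∃ rs : List A, rs.length = d ∧
        (∀ x ∈ rs, x ∈ maximalIdeal A) ∧ IsWeaklyRegular (C p) rs) →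
      (∀ p, LinearMap.ker (dmap p) = LinearMap.range (dmap (p + 1))) →
      ∃ rs : List A, rs.length = d - r ∧ (∀ x ∈ rs, x ∈ maximalIdeal A) ∧
        IsWeaklyRegular (C 0 ⧸ LinearMap.range (dmap 0)) rs := by
  induction r with
  | zero =>
    intro d _ C _ _ _ hvanish dmap hMCM hexact
    haveI := hvanish 1 (by omega)
    have hrange : LinearMap.range (dmap 0) = ⊥ := by
      rw [LinearMap.range_eq_bot]
      apply LinearMap.ext
      intro x
      rw [Subsingleton.elim x 0, map_zero, LinearMap.zero_apply]
    obtain ⟨rs, hlen, hmem, hreg⟩ := hMCM 0 le_rfl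
    have e : (C 0 ⧸ LinearMap.range (dmap 0)) ≃ₗ[A] C 0 :=
      Submodule.quotEquivOfEqBot _ hrange
    exact ⟨rs, by simpa using hlen, hmem, (e.isWeaklyRegular_congr rs).mpr hreg⟩
  | succ r IH =>
    intro d hrd C _ _ _ hvanish dmap hMCM hexact
    obtain ⟨ts, htslen, htsmem, hts⟩ :=
      IH d (by omega) (fun p => C (p+1)) (fun p hp => hvanish (p+1) (by omega))
        (fun p => dmap (p+1)) (fun p hp => hMCM (p+1) (by omega))
        (fun p => hexact (p+1))
    have e : (C 1 ⧸ LinearMap.range (dmap 1)) ≃ₗ[A] ↥(LinearMap.range (dmap 0)) :=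
      (Submodule.quotEquivOfEq _ _ (hexact 0).symm) ≪≫ₗ (dmap 0).quotKerEquivRange
    have hB : IsWeaklyRegular (↥(LinearMap.range (dmap 0))) ts :=
      (e.isWeaklyRegular_congr ts).mp hts
    obtain ⟨rs₀, hrs₀len, hrs₀mem, hrs₀⟩ := hMCM 0 (by omega)
    obtain ⟨zs, hzslen, hzsmem, hzs⟩ :=
      depth_lemma (d - (r+1)) (↥(LinearMap.range (dmap 0))) (C 0)
        (C 0 ⧸ LinearMap.range (dmap 0))
        (Submodule.subtype _) (Submodule.mkQ _)
        (Submodule.injective_subtype _) (Submodule.mkQ_surjective _)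
        (by rw [Submodule.ker_mkQ, Submodule.range_subtype])
        ts (by omega) htsmem hB
        (rs₀.take (d - (r+1)))
        (by rw [List.length_take, hrs₀len]; omega)
        (fun x hx => hrs₀mem x (List.mem_of_mem_take hx))
        (isWeaklyRegular_take rs₀ _ hrs₀)
    exact ⟨zs, hzslen, hzsmem, hzs⟩

end Res


open RingTheory.Sequence IsLocalRing in
theorem H0_of_acyclic_MCM_complex_is_CM
    (A : Type) [CommRing A] [IsNoetherianRing A] [IsLocalRing A]
    (d r : ℕ) (hd : ringKrullDim A = (d : WithBot (WithTop ℕ))) (hrd : r ≤ d)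
    (C : ℕ → Type) [∀ p, AddCommGroup (C p)] [∀ p, Module A (C p)]
    [∀ p, Module.Finite A (C p)]
    -- the complex is concentrated in degrees `0, …, r`
    (hvanish : ∀ p, r < p → Subsingleton (C p))
    (dmap : ∀ p, C (p + 1) →ₗ[A] C p)
    (hcomplex : ∀ p, (dmap p).comp (dmap (p + 1)) = 0)
    -- each `C_p` (for `p ≤ r`) is maximal Cohen–Macaulay with support `Spec A`
    (hMCM : ∀ p, p ≤ r →
      ringKrullDim (A ⧸ Module.annihilator A (C p)) = ringKrullDim A ∧
      ∃ rs : List A, rs.length = d ∧ (∀ x ∈ rs, x ∈ maximalIdeal A) ∧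
        IsWeaklyRegular (C p) rs)
    -- `H_p(C_•) = 0` for all `p > 0`
    (hexact : ∀ p, LinearMap.ker (dmap p) = LinearMap.range (dmap (p + 1)))
    -- `dim Supp L ≤ d − r` for `L = H₀ = C₀ / im d₀`
    (hsupp : ringKrullDim (A ⧸ Module.annihilator A (C 0 ⧸ LinearMap.range (dmap 0))) ≤
      ((d - r : ℕ) : WithBot (WithTop ℕ))) :
    Subsingleton (C 0 ⧸ LinearMap.range (dmap 0)) ∨
      (ringKrullDim (A ⧸ Module.annihilator A (C 0 ⧸ LinearMap.range (dmap 0))) =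
          ((d - r : ℕ) : WithBot (WithTop ℕ)) ∧
        ∃ rs : List A, rs.length = d - r ∧ (∀ x ∈ rs, x ∈ maximalIdeal A) ∧
          IsWeaklyRegular (C 0 ⧸ LinearMap.range (dmap 0)) rs) := by
  by_cases hL : Subsingleton (C 0 ⧸ LinearMap.range (dmap 0))
  · exact Or.inl hL
  right
  haveI : Nontrivial (C 0 ⧸ LinearMap.range (dmap 0)) :=
    not_subsingleton_iff_nontrivial.mp hL
  obtain ⟨rs, hlen, hmem, hreg⟩ :=
    res_lemma r d hrd C hvanish dmap (fun p hp => (hMCM p hp).2) hexact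
  refine ⟨le_antisymm hsupp ?_, rs, hlen, hmem, hreg⟩
  exact dim_lower (d - r) _ rs hlen hmem hreg
end
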